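/- arXiv:1408.0904 — 2 statements merged into one kernel-verified Lean document; each statement's English description precedes it below -/
import Mathlib

section
/- For every integer k ≥ 0, the expected number of vertices of degree k of the one-step partial duplication G' of G satisfies E[F_k(G')] = F_k(G) + p·(k-1)·F°_{k-1}(G) − p·k·F°_k(G) + Σ_{ℓ ≥ k} F°_ℓ(G) · binom(ℓ, k) · p^k · (1-p)^{ℓ-k}, where F°_j(G) := F_j(G)/n, F_{-1}(G) := 0, and 0^0 := 1. -/
open Finset

/-- The graph `G_{v,S}` obtained from `G` by adding one new vertex (`none`) adjacent
exactly to the vertices of `S`. -/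
def SimpleGraph.extendVertex {V : Type*} (G : SimpleGraph V) (S : Finset V) :
    SimpleGraph (Option V) where
  Adj x y :=
    match x, y with
    | some u, some w => G.Adj u w
    | some u, none => u ∈ S
    | none, some w => w ∈ S
    | none, none => False
  symm := by
    constructor
    rintro (_ | u) (_ | w) h
    · exact h
    · exact h
    · exact h
    · exact G.adj_symm h
  loopless := by
    constructor
    rintro (_ | u) h
    · exact h
    · exact G.irrefl h

instance {V : Type*} [DecidableEq V] (G : SimpleGraph V) [DecidableRel G.Adj] (S : Finset V) :
    DecidableRel (G.extendVertex S).Adj := fun x y =>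
  match x, y with
  | some u, some w => inferInstanceAs (Decidable (G.Adj u w))
  | some u, none => inferInstanceAs (Decidable (u ∈ S))
  | none, some w => inferInstanceAs (Decidable (w ∈ S))
  | none, none => inferInstanceAs (Decidable False)

/-- `F_k(G)`: the number of vertices of `G` of degree exactly `k`. -/
def degCount {V : Type*} [Fintype V] (G : SimpleGraph V) [DecidableRel G.Adj] (k : ℕ) : ℕ :=
  (Finset.univ.filter fun v => G.degree v = k).card

set_option linter.unusedSectionVars false


section WSum
variable {V : Type*} [DecidableEq V] (p : ℝ)

lemma wsum_one (s : Finset V) :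
    ∑ S ∈ s.powerset, p ^ S.card * (1 - p) ^ (s.card - S.card) = 1 := by
  rw [Finset.sum_powerset]
  rw [Finset.sum_congr rfl (fun j hj => Finset.sum_congr rfl
    (fun S hS => by rw [(Finset.mem_powersetCard.mp hS).2]))]
  rw [Finset.sum_congr rfl (fun j _ => by
    rw [Finset.sum_const, Finset.card_powersetCard, nsmul_eq_mul])]
  have h := add_pow p (1 - p) s.card
  have h1 : p + (1 - p) = 1 := by ring
  rw [h1, one_pow] at h
  refine Eq.trans ?_ h.symm
  exact Finset.sum_congr rfl fun j _ => by ring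

lemma wsum_ite (s : Finset V) {w : V} (hw : w ∈ s) (a b : ℝ) :
    ∑ S ∈ s.powerset, p ^ S.card * (1 - p) ^ (s.card - S.card) * (if w ∈ S then a else b)
      = p * a + (1 - p) * b := by
  obtain ⟨t, hwt, rfl⟩ : ∃ t, w ∉ t ∧ insert w t = s :=
    ⟨s.erase w, s.notMem_erase w, insert_erase hw⟩
  rw [Finset.sum_powerset_insert hwt]
  have hc : (insert w t).card = t.card + 1 := card_insert_of_notMem hwt
  have h1 : ∑ T ∈ t.powerset,
      p ^ T.card * (1 - p) ^ ((insert w t).card - T.card) * (if w ∈ T then a else b)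
      = (1 - p) * b := by
    have : ∑ T ∈ t.powerset,
        p ^ T.card * (1 - p) ^ ((insert w t).card - T.card) * (if w ∈ T then a else b)
        = (1 - p) * b * ∑ T ∈ t.powerset, p ^ T.card * (1 - p) ^ (t.card - T.card) := by
      rw [Finset.mul_sum]
      refine sum_congr rfl fun T hT => ?_
      have hwT : w ∉ T := fun h => hwt (Finset.mem_powerset.mp hT h)
      have hle : T.card ≤ t.card := Finset.card_le_card (Finset.mem_powerset.mp hT)
      rw [if_neg hwT, hc, show t.card + 1 - T.card = (t.card - T.card) + 1 by omega, pow_succ]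
      ring
    rw [this, wsum_one, mul_one]
  have h2 : ∑ T ∈ t.powerset,
      p ^ (insert w T).card * (1 - p) ^ ((insert w t).card - (insert w T).card) *
        (if w ∈ insert w T then a else b) = p * a := by
    have : ∑ T ∈ t.powerset,
        p ^ (insert w T).card * (1 - p) ^ ((insert w t).card - (insert w T).card) *
          (if w ∈ insert w T then a else b)
        = p * a * ∑ T ∈ t.powerset, p ^ T.card * (1 - p) ^ (t.card - T.card) := by
      rw [Finset.mul_sum]
      refine sum_congr rfl fun T hT => ?_
      have hwT : w ∉ T := fun h => hwt (Finset.mem_powerset.mp hT h)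
      rw [if_pos (mem_insert_self w T), card_insert_of_notMem hwT, hc,
        show t.card + 1 - (T.card + 1) = t.card - T.card by omega, pow_succ]
      ring
    rw [this, wsum_one, mul_one]
  rw [h1, h2, add_comm]

lemma wsum_ite_not (s : Finset V) {w : V} (hw : w ∉ s) (a b : ℝ) :
    ∑ S ∈ s.powerset, p ^ S.card * (1 - p) ^ (s.card - S.card) * (if w ∈ S then a else b)
      = b := by
  have : ∑ S ∈ s.powerset, p ^ S.card * (1 - p) ^ (s.card - S.card) * (if w ∈ S then a else b)
      = b * ∑ S ∈ s.powerset, p ^ S.card * (1 - p) ^ (s.card - S.card) := by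
    rw [Finset.mul_sum]
    refine sum_congr rfl fun S hS => ?_
    rw [if_neg (fun h => hw (Finset.mem_powerset.mp hS h))]
    ring
  rw [this, wsum_one, mul_one]

lemma wsum_card (s : Finset V) (k : ℕ) :
    ∑ S ∈ s.powerset, p ^ S.card * (1 - p) ^ (s.card - S.card) * (if S.card = k then (1:ℝ) else 0)
      = (s.card.choose k : ℝ) * p ^ k * (1 - p) ^ (s.card - k) := by
  rw [Finset.sum_congr rfl (g := fun S => if S.card = k then p ^ S.card * (1-p) ^ (s.card - S.card) else 0)
    (fun S _ => by by_cases h : S.card = k <;> simp [h])]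
  rw [← Finset.sum_filter, ← Finset.powersetCard_eq_filter]
  rw [Finset.sum_congr rfl (fun S hS => by rw [(Finset.mem_powersetCard.mp hS).2])]
  rw [Finset.sum_const, Finset.card_powersetCard, nsmul_eq_mul]
  ring
end WSum

section Deg
variable {V : Type*} [Fintype V] [DecidableEq V] (G : SimpleGraph V) [DecidableRel G.Adj] (S : Finset V)

lemma extendVertex_adj_some_some (u w : V) :
    (G.extendVertex S).Adj (some u) (some w) ↔ G.Adj u w := Iff.rfl
lemma extendVertex_adj_some_none (u : V) :
    (G.extendVertex S).Adj (some u) none ↔ u ∈ S := Iff.rfl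
lemma extendVertex_adj_none_some (w : V) :
    (G.extendVertex S).Adj none (some w) ↔ w ∈ S := Iff.rfl

lemma degree_extend_some (w : V) :
    (G.extendVertex S).degree (some w) = G.degree w + (if w ∈ S then 1 else 0) := by
  rw [SimpleGraph.degree, SimpleGraph.neighborFinset_eq_filter, Finset.card_filter,
    Fintype.sum_option, SimpleGraph.degree, SimpleGraph.neighborFinset_eq_filter,
    Finset.card_filter]
  simp only [extendVertex_adj_some_none, extendVertex_adj_some_some]
  omega

lemma degree_extend_none :
    (G.extendVertex S).degree none = S.card := by
  rw [SimpleGraph.degree, SimpleGraph.neighborFinset_eq_filter, Finset.card_filter,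
    Fintype.sum_option]
  simp only [extendVertex_adj_none_some]
  have : ((G.extendVertex S).Adj none none) = False := by
    simp [SimpleGraph.extendVertex]
  rw [if_neg (by rw [this]; exact id)]
  rw [zero_add]
  rw [← Finset.card_filter]
  congr 1
  ext u
  simp

lemma degCount_extend (k : ℕ) :
    (degCount (G.extendVertex S) k : ℝ)
      = (if S.card = k then 1 else 0)
        + ∑ w : V, (if G.degree w + (if w ∈ S then 1 else 0) = k then (1:ℝ) else 0) := by
  rw [degCount, Finset.card_filter]
  push_cast
  rw [Fintype.sum_option]
  simp only [degree_extend_none, degree_extend_some]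
end Deg


/-- The expected number of vertices of degree `k` of the one-step partial duplication of `G`
equals `F_k(G) + p(k-1)F°_{k-1}(G) - pkF°_k(G) + Σ_{ℓ ≥ k} F°_ℓ(G) · binom(ℓ,k) p^k (1-p)^{ℓ-k}`,
where `F°_j(G) = F_j(G)/n` and `F_{-1}(G) := 0`. -/
theorem stmt_12 {V : Type*} [Fintype V] [DecidableEq V]
    (G : SimpleGraph V) [DecidableRel G.Adj]
    (hV : 1 ≤ Fintype.card V) (p : ℝ) (hp0 : 0 ≤ p) (hp1 : p ≤ 1) (k : ℕ) :
    (1 / (Fintype.card V : ℝ)) *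
      ∑ v : V, ∑ S ∈ (G.neighborFinset v).powerset,
        p ^ S.card * (1 - p) ^ (G.degree v - S.card) *
          (degCount (G.extendVertex S) k : ℝ)
      = (degCount G k : ℝ)
        + (if k = 0 then 0 else
            p * ((k : ℝ) - 1) * ((degCount G (k - 1) : ℝ) / (Fintype.card V : ℝ)))
        - p * (k : ℝ) * ((degCount G k : ℝ) / (Fintype.card V : ℝ))
        + ∑' ℓ : ℕ, ((degCount G ℓ : ℝ) / (Fintype.card V : ℝ)) * (ℓ.choose k : ℝ)
            * p ^ k * (1 - p) ^ (ℓ - k) := by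
  classical
  have hn : (Fintype.card V : ℝ) ≠ 0 := Nat.cast_ne_zero.mpr (by omega)
  have degCount_cast : ∀ j : ℕ, (degCount G j : ℝ)
      = ∑ w : V, (if G.degree w = j then (1:ℝ) else 0) := by
    intro j
    rw [degCount, Finset.card_filter]
    push_cast
    rfl
  have key : ∀ v : V, ∑ S ∈ (G.neighborFinset v).powerset,
      p ^ S.card * (1 - p) ^ (G.degree v - S.card) * (degCount (G.extendVertex S) k : ℝ)
      = ((G.degree v).choose k : ℝ) * p ^ k * (1 - p) ^ (G.degree v - k)
        + ∑ w : V, (if w ∈ G.neighborFinset v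
            then p * (if G.degree w + 1 = k then (1:ℝ) else 0)
              + (1 - p) * (if G.degree w = k then (1:ℝ) else 0)
            else (if G.degree w = k then (1:ℝ) else 0)) := by
    intro v
    have hdeg : G.degree v = (G.neighborFinset v).card := rfl
    have step1 : ∀ S ∈ (G.neighborFinset v).powerset,
        p ^ S.card * (1 - p) ^ (G.degree v - S.card) * (degCount (G.extendVertex S) k : ℝ)
        = p ^ S.card * (1 - p) ^ ((G.neighborFinset v).card - S.card) *
            (if S.card = k then (1:ℝ) else 0)
          + ∑ w : V, p ^ S.card * (1 - p) ^ ((G.neighborFinset v).card - S.card) *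
              (if w ∈ S then (if G.degree w + 1 = k then (1:ℝ) else 0)
               else (if G.degree w = k then (1:ℝ) else 0)) := by
      intro S hS
      rw [degCount_extend, ← hdeg, mul_add, Finset.mul_sum]
      congr 1
      refine sum_congr rfl fun w _ => ?_
      congr 1
      by_cases hw : w ∈ S <;> simp [hw]
    rw [Finset.sum_congr rfl step1, Finset.sum_add_distrib]
    congr 1
    · rw [hdeg]
      exact wsum_card p _ k
    · rw [Finset.sum_comm]
      refine sum_congr rfl fun w _ => ?_
      by_cases hw : w ∈ G.neighborFinset v
      · rw [wsum_ite p _ hw, if_pos hw]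
      · rw [wsum_ite_not p _ hw, if_neg hw]
  have hsum1 : ∑ v : V, ∑ w : V, (if w ∈ G.neighborFinset v
        then p * (if G.degree w + 1 = k then (1:ℝ) else 0)
          + (1 - p) * (if G.degree w = k then (1:ℝ) else 0)
        else (if G.degree w = k then (1:ℝ) else 0))
      = (Fintype.card V : ℝ) * (degCount G k : ℝ)
        + (p * (∑ w : V, (G.degree w : ℝ) * (if G.degree w + 1 = k then (1:ℝ) else 0))
          - p * (∑ w : V, (G.degree w : ℝ) * (if G.degree w = k then (1:ℝ) else 0))) := by
    have h1 : ∀ v w : V, (if w ∈ G.neighborFinset v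
        then p * (if G.degree w + 1 = k then (1:ℝ) else 0)
          + (1 - p) * (if G.degree w = k then (1:ℝ) else 0)
        else (if G.degree w = k then (1:ℝ) else 0))
        = (if G.degree w = k then (1:ℝ) else 0)
          + (if v ∈ G.neighborFinset w
              then p * (if G.degree w + 1 = k then (1:ℝ) else 0)
                - p * (if G.degree w = k then (1:ℝ) else 0) else 0) := by
      intro v w
      have hiff : (w ∈ G.neighborFinset v) ↔ (v ∈ G.neighborFinset w) := by
        rw [SimpleGraph.mem_neighborFinset, SimpleGraph.mem_neighborFinset]
        exact G.adj_comm v w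
      by_cases h : v ∈ G.neighborFinset w
      · rw [if_pos (hiff.mpr h), if_pos h]; ring
      · rw [if_neg (fun hh => h (hiff.mp hh)), if_neg h]; ring
    calc ∑ v : V, ∑ w : V, (if w ∈ G.neighborFinset v
          then p * (if G.degree w + 1 = k then (1:ℝ) else 0)
            + (1 - p) * (if G.degree w = k then (1:ℝ) else 0)
          else (if G.degree w = k then (1:ℝ) else 0))
        = ∑ v : V, (∑ w : V, (if G.degree w = k then (1:ℝ) else 0)
            + ∑ w : V, (if v ∈ G.neighborFinset w
                then p * (if G.degree w + 1 = k then (1:ℝ) else 0)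
                  - p * (if G.degree w = k then (1:ℝ) else 0) else 0)) := by
          refine sum_congr rfl fun v _ => ?_
          rw [← Finset.sum_add_distrib]
          exact sum_congr rfl fun w _ => h1 v w
      _ = (Fintype.card V : ℝ) * (degCount G k : ℝ)
          + ∑ w : V, ∑ v : V, (if v ∈ G.neighborFinset w
              then p * (if G.degree w + 1 = k then (1:ℝ) else 0)
                - p * (if G.degree w = k then (1:ℝ) else 0) else 0) := by
          rw [Finset.sum_add_distrib, Finset.sum_const, Finset.sum_comm, nsmul_eq_mul,
            degCount_cast k, Finset.card_univ]
      _ = (Fintype.card V : ℝ) * (degCount G k : ℝ)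
          + (p * (∑ w : V, (G.degree w : ℝ) * (if G.degree w + 1 = k then (1:ℝ) else 0))
            - p * (∑ w : V, (G.degree w : ℝ) * (if G.degree w = k then (1:ℝ) else 0))) := by
          congr 1
          rw [Finset.mul_sum, Finset.mul_sum, ← Finset.sum_sub_distrib]
          refine sum_congr rfl fun w _ => ?_
          rw [Finset.sum_ite_mem, Finset.univ_inter, Finset.sum_const, nsmul_eq_mul,
            SimpleGraph.card_neighborFinset_eq_degree]
          ring
  have hA : ∑ w : V, (G.degree w : ℝ) * (if G.degree w + 1 = k then (1:ℝ) else 0)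
      = (if k = 0 then 0 else ((k:ℝ) - 1) * (degCount G (k-1) : ℝ)) := by
    rcases Nat.eq_zero_or_pos k with rfl | hk
    · simp
    · rw [if_neg hk.ne', degCount_cast, Finset.mul_sum]
      refine sum_congr rfl fun w _ => ?_
      by_cases h : G.degree w + 1 = k
      · rw [if_pos h, if_pos (by omega : G.degree w = k - 1)]
        have h2 : ((G.degree w : ℝ) + 1) = (k : ℝ) := by exact_mod_cast h
        have h3 : (G.degree w : ℝ) = (k : ℝ) - 1 := by linarith
        rw [h3]
      · rw [if_neg h, if_neg (by omega : ¬ G.degree w = k - 1)]; ring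
  have hB2 : ∑ w : V, (G.degree w : ℝ) * (if G.degree w = k then (1:ℝ) else 0)
      = (k:ℝ) * (degCount G k : ℝ) := by
    rw [degCount_cast, Finset.mul_sum]
    refine sum_congr rfl fun w _ => ?_
    by_cases h : G.degree w = k <;> simp [h]
  have hfib : ∑ v : V, ((G.degree v).choose k : ℝ) * p ^ k * (1 - p) ^ (G.degree v - k)
      = ∑ ℓ ∈ Finset.range (Fintype.card V),
          (degCount G ℓ : ℝ) * (ℓ.choose k : ℝ) * p ^ k * (1 - p) ^ (ℓ - k) := by
    have hfib0 := Finset.sum_fiberwise_of_maps_to (s := (Finset.univ : Finset V))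
      (g := fun v => G.degree v) (t := Finset.range (Fintype.card V))
      (fun v _ => Finset.mem_range.mpr (G.degree_lt_card_verts v))
      (fun v => ((G.degree v).choose k : ℝ) * p ^ k * (1 - p) ^ (G.degree v - k))
    rw [← hfib0]
    refine sum_congr rfl fun ℓ _ => ?_
    rw [Finset.sum_congr rfl (fun v hv => by rw [(Finset.mem_filter.mp hv).2]),
      Finset.sum_const, nsmul_eq_mul, degCount]
    ring
  have hdeg0 : ∀ ℓ : ℕ, Fintype.card V ≤ ℓ → degCount G ℓ = 0 := by
    intro ℓ hℓ
    rw [degCount, Finset.card_eq_zero, Finset.filter_eq_empty_iff]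
    intro v _
    have := G.degree_lt_card_verts v
    omega
  have htsum : ∑' ℓ : ℕ, ((degCount G ℓ : ℝ) / (Fintype.card V : ℝ)) * (ℓ.choose k : ℝ)
        * p ^ k * (1 - p) ^ (ℓ - k)
      = ∑ ℓ ∈ Finset.range (Fintype.card V), ((degCount G ℓ : ℝ) / (Fintype.card V : ℝ))
          * (ℓ.choose k : ℝ) * p ^ k * (1 - p) ^ (ℓ - k) := by
    refine tsum_eq_sum fun ℓ hℓ => ?_
    rw [hdeg0 ℓ (Nat.le_of_not_lt (fun h => hℓ (Finset.mem_range.mpr h)))]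
    simp
  have hdiv : ∑ ℓ ∈ Finset.range (Fintype.card V), ((degCount G ℓ : ℝ) / (Fintype.card V : ℝ))
        * (ℓ.choose k : ℝ) * p ^ k * (1 - p) ^ (ℓ - k)
      = (1 / (Fintype.card V : ℝ)) * ∑ ℓ ∈ Finset.range (Fintype.card V),
          (degCount G ℓ : ℝ) * (ℓ.choose k : ℝ) * p ^ k * (1 - p) ^ (ℓ - k) := by
    rw [Finset.mul_sum]
    exact sum_congr rfl fun ℓ _ => by ring
  rw [Finset.sum_congr rfl (fun v _ => key v), Finset.sum_add_distrib, hfib, hsum1, hA, hB2,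
    htsum, hdiv]
  rcases Nat.eq_zero_or_pos k with rfl | hk
  · simp only [if_pos rfl]
    field_simp
    simp only [↓reduceIte]
    ring
  · rw [if_neg hk.ne', if_neg hk.ne']
    field_simp
    have hs : ∑ x ∈ range (Fintype.card V), p ^ k * (degCount G x : ℝ) * (x.choose k : ℝ) * (1 - p) ^ (x - k)
        = ∑ x ∈ range (Fintype.card V), (degCount G x : ℝ) * (x.choose k : ℝ) * p ^ k * (1 - p) ^ (x - k) :=
      sum_congr rfl fun x _ => by ring
    rw [hs]
    ring
end

section
/- For every integer m ≥ 1, the expected number of m-stars of the one-step partial duplication G' of G satisfies E[S_m(G')] = (1 + (p·m + p^m)/n) · S_m(G) + (p·m·(m-1)/n) · S_{m-1}(G). -/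
open Finset

/-- `S_k(G) := Σ_{ℓ ≥ k} ℓ(ℓ-1)⋯(ℓ-k+1) F_ℓ(G)`, the number of `k`-stars of `G`
(note `S_0(G) = |V|`, since the descending factorial is `1` for `k = 0`). -/
noncomputable def starCount {V : Type*} [Fintype V] (G : SimpleGraph V)
    [DecidableRel G.Adj] (k : ℕ) : ℝ :=
  ∑' ℓ : ℕ, (ℓ.descFactorial k : ℝ) * (degCount G ℓ : ℝ)


lemma descFac_add_one (k m : ℕ) :
    (k+1).descFactorial m = k.descFactorial m + m * k.descFactorial (m-1) := by
  cases m with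
  | zero => simp
  | succ j =>
    rw [Nat.succ_descFactorial_succ, Nat.descFactorial_succ, Nat.succ_sub_one]
    rcases le_or_gt j k with h | h
    · rw [← Nat.add_mul]; congr 1; omega
    · simp [Nat.descFactorial_of_lt h]

lemma mul_descFac (d j : ℕ) :
    d * d.descFactorial j = d.descFactorial (j+1) + j * d.descFactorial j := by
  rw [Nat.descFactorial_succ]
  rcases le_or_gt j d with h | h
  · rw [← Nat.add_mul]; congr 1; omega
  · simp [Nat.descFactorial_of_lt h]

lemma starCount_eq_sum {V : Type*} [Fintype V] (G : SimpleGraph V) [DecidableRel G.Adj]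
    (k : ℕ) : starCount G k = ∑ v : V, ((G.degree v).descFactorial k : ℝ) := by
  rw [starCount, tsum_eq_sum (s := Finset.range (Fintype.card V))
      (f := fun ℓ => (ℓ.descFactorial k : ℝ) * (degCount G ℓ : ℝ))]
  · rw [← Finset.sum_fiberwise_of_maps_to
      (g := fun v => G.degree v) (t := Finset.range (Fintype.card V))
      (fun v _ => Finset.mem_range.mpr (G.degree_lt_card_verts v))
      (fun v => ((G.degree v).descFactorial k : ℝ))]
    refine Finset.sum_congr rfl fun ℓ _ => ?_
    have h : ∑ v ∈ Finset.univ.filter (fun v => G.degree v = ℓ), ((G.degree v).descFactorial k : ℝ)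
        = ∑ _v ∈ Finset.univ.filter (fun v => G.degree v = ℓ), ((ℓ.descFactorial k : ℝ)) :=
      Finset.sum_congr rfl fun v hv => by
        simp only [Finset.mem_filter] at hv; rw [hv.2]
    rw [h, Finset.sum_const, degCount, nsmul_eq_mul, mul_comm]
  · intro ℓ hℓ
    have : degCount G ℓ = 0 := by
      rw [degCount, Finset.card_eq_zero, Finset.filter_eq_empty_iff]
      intro v _
      exact fun h => hℓ (Finset.mem_range.mpr (h ▸ G.degree_lt_card_verts v))
    simp [this]
section Aux2
open Finset
variable {V : Type*} [Fintype V] [DecidableEq V] (G : SimpleGraph V) [DecidableRel G.Adj]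

lemma extend_degree_none (S : Finset V) :
    (G.extendVertex S).degree none = S.card := by
  have h : (G.extendVertex S).neighborFinset none = S.map Function.Embedding.some := by
    ext x
    cases x <;> simp only [SimpleGraph.mem_neighborFinset] <;> simp [SimpleGraph.extendVertex]
  rw [SimpleGraph.degree, h, Finset.card_map]

lemma extend_degree_some (S : Finset V) (u : V) :
    (G.extendVertex S).degree (some u) = G.degree u + (if u ∈ S then 1 else 0) := by
  by_cases hu : u ∈ S
  · have h : (G.extendVertex S).neighborFinset (some u)
        = insert none ((G.neighborFinset u).map Function.Embedding.some) := by
      ext x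
      cases x <;> simp only [SimpleGraph.mem_neighborFinset] <;> simp [SimpleGraph.extendVertex, hu]
    rw [SimpleGraph.degree, h, Finset.card_insert_of_notMem (by simp), Finset.card_map,
      SimpleGraph.degree, if_pos hu]
  · have h : (G.extendVertex S).neighborFinset (some u)
        = (G.neighborFinset u).map Function.Embedding.some := by
      ext x
      cases x <;> simp only [SimpleGraph.mem_neighborFinset] <;> simp [SimpleGraph.extendVertex, hu]
    rw [SimpleGraph.degree, h, Finset.card_map, SimpleGraph.degree, if_neg hu, Nat.add_zero]

lemma powerset_sum_weights (p : ℝ) (T : Finset V) :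
    ∑ S ∈ T.powerset, p ^ S.card * (1 - p) ^ (T.card - S.card) = 1 := by
  have h := Finset.prod_add (fun _ : V => p) (fun _ : V => (1 - p)) T
  simp only [Finset.prod_const] at h
  have h2 : ∀ S ∈ T.powerset, p ^ S.card * (1 - p) ^ (T \ S).card
      = p ^ S.card * (1 - p) ^ (T.card - S.card) := by
    intro S hS
    rw [Finset.card_sdiff_of_subset (Finset.mem_powerset.mp hS)]
  rw [← Finset.sum_congr rfl h2, ← h]
  simp

lemma powerset_sum_desc (p : ℝ) (T : Finset V) (m : ℕ) :
    ∑ S ∈ T.powerset, p ^ S.card * (1 - p) ^ (T.card - S.card) * ((S.card.descFactorial m : ℝ))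
      = p ^ m * (T.card.descFactorial m : ℝ) := by
  induction T using Finset.induction generalizing m with
  | empty =>
    cases m <;> simp
  | @insert a T' ha ih =>
    cases m with
    | zero =>
      simp only [Nat.descFactorial_zero, Nat.cast_one, mul_one, pow_zero, one_mul]
      exact powerset_sum_weights p _
    | succ j =>
      rw [Finset.sum_powerset_insert ha]
      have hcard : (insert a T').card = T'.card + 1 := Finset.card_insert_of_notMem ha
      have e1 : ∑ S ∈ T'.powerset,
          p ^ S.card * (1 - p) ^ ((insert a T').card - S.card) * ((S.card.descFactorial (j+1) : ℝ))
          = (1 - p) * (p ^ (j+1) * (T'.card.descFactorial (j+1) : ℝ)) := by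
        rw [← ih (j+1), Finset.mul_sum]
        refine Finset.sum_congr rfl fun S hS => ?_
        have hle : S.card ≤ T'.card := Finset.card_le_card (Finset.mem_powerset.mp hS)
        rw [hcard, Nat.succ_sub hle, pow_succ]
        ring
      have e2 : ∑ S ∈ T'.powerset,
          p ^ (insert a S).card * (1 - p) ^ ((insert a T').card - (insert a S).card)
            * (((insert a S).card.descFactorial (j+1) : ℝ))
          = p * (p ^ (j+1) * (T'.card.descFactorial (j+1) : ℝ))
            + (p * (j+1)) * (p ^ j * (T'.card.descFactorial j : ℝ)) := by
        have step : ∀ S ∈ T'.powerset,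
            p ^ (insert a S).card * (1 - p) ^ ((insert a T').card - (insert a S).card)
              * (((insert a S).card.descFactorial (j+1) : ℝ))
            = p * (p ^ S.card * (1 - p) ^ (T'.card - S.card) * ((S.card.descFactorial (j+1) : ℝ)))
              + (p * (j+1)) * (p ^ S.card * (1 - p) ^ (T'.card - S.card)
                  * ((S.card.descFactorial j : ℝ))) := by
          intro S hS
          have hSsub := Finset.mem_powerset.mp hS
          have haS : a ∉ S := fun h => ha (hSsub h)
          rw [Finset.card_insert_of_notMem haS, hcard, Nat.succ_sub_succ, descFac_add_one,
            Nat.succ_sub_one, pow_succ]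
          push_cast
          ring
        rw [Finset.sum_congr rfl step, Finset.sum_add_distrib, ← Finset.mul_sum, ← Finset.mul_sum,
          ih (j+1), ih j]
      rw [e1, e2, hcard, descFac_add_one, Nat.succ_sub_one]
      push_cast
      ring

lemma powerset_sum_inner (p : ℝ) (f : V → ℝ) (T : Finset V) :
    ∑ S ∈ T.powerset, p ^ S.card * (1 - p) ^ (T.card - S.card) * (∑ u ∈ S, f u)
      = p * ∑ u ∈ T, f u := by
  induction T using Finset.induction with
  | empty => simp
  | @insert a T' ha ih =>
    rw [Finset.sum_powerset_insert ha]
    have hcard : (insert a T').card = T'.card + 1 := Finset.card_insert_of_notMem ha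
    have e1 : ∑ S ∈ T'.powerset,
        p ^ S.card * (1 - p) ^ ((insert a T').card - S.card) * (∑ u ∈ S, f u)
        = (1 - p) * (p * ∑ u ∈ T', f u) := by
      rw [← ih, Finset.mul_sum]
      refine Finset.sum_congr rfl fun S hS => ?_
      have hle : S.card ≤ T'.card := Finset.card_le_card (Finset.mem_powerset.mp hS)
      rw [hcard, Nat.succ_sub hle, pow_succ]
      ring
    have e2 : ∑ S ∈ T'.powerset,
        p ^ (insert a S).card * (1 - p) ^ ((insert a T').card - (insert a S).card)
          * (∑ u ∈ insert a S, f u)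
        = p * f a + p * (p * ∑ u ∈ T', f u) := by
      have key : ∀ S ∈ T'.powerset,
          p ^ (insert a S).card * (1 - p) ^ ((insert a T').card - (insert a S).card)
            * (∑ u ∈ insert a S, f u)
          = p * (p ^ S.card * (1 - p) ^ (T'.card - S.card) * f a)
            + p * (p ^ S.card * (1 - p) ^ (T'.card - S.card) * (∑ u ∈ S, f u)) := by
        intro S hS
        have hSsub := Finset.mem_powerset.mp hS
        have haS : a ∉ S := fun h => ha (hSsub h)
        rw [Finset.card_insert_of_notMem haS, hcard, Nat.succ_sub_succ,
          Finset.sum_insert haS, pow_succ]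
        ring
      rw [Finset.sum_congr rfl key, Finset.sum_add_distrib, ← Finset.mul_sum, ← Finset.mul_sum,
        ← Finset.sum_mul, powerset_sum_weights, ← ih]
      ring
    rw [e1, e2, Finset.sum_insert ha]
    ring

lemma starCount_extend (S : Finset V) (m : ℕ) :
    starCount (G.extendVertex S) m
      = starCount G m + (S.card.descFactorial m : ℝ)
        + m * ∑ u ∈ S, ((G.degree u).descFactorial (m-1) : ℝ) := by
  rw [starCount_eq_sum, starCount_eq_sum, Fintype.sum_option, extend_degree_none]
  have key : ∀ u : V, (((G.extendVertex S).degree (some u)).descFactorial m : ℝ)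
      = ((G.degree u).descFactorial m : ℝ)
        + (if u ∈ S then (m : ℝ) * ((G.degree u).descFactorial (m-1) : ℝ) else 0) := by
    intro u
    rw [extend_degree_some]
    by_cases hu : u ∈ S
    · rw [if_pos hu, if_pos hu, descFac_add_one]
      push_cast
      ring
    · rw [if_neg hu, if_neg hu]
      simp
  rw [Finset.sum_congr rfl (fun u _ => key u), Finset.sum_add_distrib, Finset.sum_ite_mem,
    Finset.univ_inter, Finset.mul_sum]
  ring

lemma double_sum_neighbors (g : ℕ → ℝ) :
    ∑ v : V, ∑ u ∈ G.neighborFinset v, g (G.degree u)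
      = ∑ u : V, (G.degree u : ℝ) * g (G.degree u) := by
  have h : ∀ v : V, ∑ u ∈ G.neighborFinset v, g (G.degree u)
      = ∑ u : V, if G.Adj v u then g (G.degree u) else 0 := by
    intro v
    rw [SimpleGraph.neighborFinset_eq_filter, Finset.sum_filter]
  rw [Finset.sum_congr rfl (fun v _ => h v), Finset.sum_comm]
  refine Finset.sum_congr rfl fun u _ => ?_
  have h2 : ∀ v : V, (if G.Adj v u then g (G.degree u) else 0)
      = (if G.Adj u v then g (G.degree u) else 0) := fun v => if_congr (G.adj_comm v u) rfl rfl
  rw [Finset.sum_congr rfl (fun v _ => h2 v), ← Finset.sum_filter, Finset.sum_const,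
    ← SimpleGraph.neighborFinset_eq_filter, nsmul_eq_mul]
  rfl

end Aux2

/-- For `m ≥ 1`, the expected number of `m`-stars of the one-step partial duplication of `G`
equals `(1 + (pm + p^m)/n)·S_m(G) + (pm(m-1)/n)·S_{m-1}(G)`. -/
theorem stmt_13 {V : Type*} [Fintype V] [DecidableEq V]
    (G : SimpleGraph V) [DecidableRel G.Adj]
    (hV : 1 ≤ Fintype.card V) (p : ℝ) (hp0 : 0 < p) (hp1 : p ≤ 1)
    (m : ℕ) (hm : 1 ≤ m) :
    (1 / (Fintype.card V : ℝ)) *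
      ∑ v : V, ∑ S ∈ (G.neighborFinset v).powerset,
        p ^ S.card * (1 - p) ^ (G.degree v - S.card) * starCount (G.extendVertex S) m
      = (1 + (p * m + p ^ m) / (Fintype.card V : ℝ)) * starCount G m
        + (p * m * ((m : ℝ) - 1) / (Fintype.card V : ℝ)) * starCount G (m - 1) := by
  classical
  have hn : (Fintype.card V : ℝ) ≠ 0 := by
    have : (0:ℝ) < Fintype.card V := by exact_mod_cast hV
    linarith
  have key : ∀ v : V,
      ∑ S ∈ (G.neighborFinset v).powerset,
        p ^ S.card * (1 - p) ^ (G.degree v - S.card) * starCount (G.extendVertex S) m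
      = starCount G m + p ^ m * ((G.degree v).descFactorial m : ℝ)
        + ((m : ℝ) * p) * ∑ u ∈ G.neighborFinset v, ((G.degree u).descFactorial (m-1) : ℝ) := by
    intro v
    have hdeg : G.degree v = (G.neighborFinset v).card := rfl
    have step : ∀ S ∈ (G.neighborFinset v).powerset,
        p ^ S.card * (1 - p) ^ (G.degree v - S.card) * starCount (G.extendVertex S) m
        = (p ^ S.card * (1 - p) ^ ((G.neighborFinset v).card - S.card)) * starCount G m
          + p ^ S.card * (1 - p) ^ ((G.neighborFinset v).card - S.card)
              * ((S.card.descFactorial m : ℝ))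
          + (m : ℝ) * (p ^ S.card * (1 - p) ^ ((G.neighborFinset v).card - S.card)
              * (∑ u ∈ S, ((G.degree u).descFactorial (m-1) : ℝ))) := by
      intro S _
      rw [starCount_extend, hdeg]
      ring
    rw [Finset.sum_congr rfl step, Finset.sum_add_distrib, Finset.sum_add_distrib,
      ← Finset.sum_mul, powerset_sum_weights, ← Finset.mul_sum,
      powerset_sum_desc, powerset_sum_inner, one_mul, hdeg]
    ring
  rw [Finset.sum_congr rfl (fun v _ => key v), Finset.sum_add_distrib, Finset.sum_add_distrib,
    Finset.sum_const, ← Finset.mul_sum, ← Finset.mul_sum,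
    double_sum_neighbors G (fun ℓ => ((ℓ.descFactorial (m-1) : ℕ) : ℝ))]
  have hsum1 : ∑ v : V, ((G.degree v).descFactorial m : ℝ) = starCount G m :=
    (starCount_eq_sum G m).symm
  have hsum2 : ∑ u : V, (G.degree u : ℝ) * ((G.degree u).descFactorial (m-1) : ℝ)
      = starCount G m + ((m : ℝ) - 1) * starCount G (m-1) := by
    have hm1 : m - 1 + 1 = m := Nat.succ_pred_eq_of_pos hm
    have step : ∀ u : V, (G.degree u : ℝ) * ((G.degree u).descFactorial (m-1) : ℝ)
        = ((G.degree u).descFactorial m : ℝ)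
          + ((m : ℝ) - 1) * ((G.degree u).descFactorial (m-1) : ℝ) := by
      intro u
      have h := mul_descFac (G.degree u) (m-1)
      rw [hm1] at h
      have := congrArg (fun n : ℕ => (n : ℝ)) h
      push_cast at this
      rw [this, Nat.cast_sub hm]
      push_cast
      ring
    rw [Finset.sum_congr rfl (fun u _ => step u), Finset.sum_add_distrib, ← Finset.mul_sum,
      ← starCount_eq_sum, ← starCount_eq_sum]
  rw [hsum1, hsum2, Finset.card_univ, nsmul_eq_mul]
  field_simp
  ring
end
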